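/- Let γ_o(x|m_H) := (1/m_H)(2E(x,m_H) + (m_H−2)F(x,m_H), −2√(1 − m_H sin²x)). Then γ_o(−π/4|m_H) = γ_o(5π/4|m_H), the unit tangents at −π/4 and 5π/4 are opposite (in fact (γ_o^{(1)})′(±) vanish there and (γ_o^{(2)})′(−π/4|m_H) = −(γ_o^{(2)})′(5π/4|m_H)), and γ_o(·|m_H) restricted to [−π/4, 5π/4) is injective. In other words, the heart-shaped elastica is an embedded cuspidal elastica. -/

import Mathlib

open Real MeasureTheory Set

noncomputable section

abbrev E2 := EuclideanSpace ℝ (Fin 2)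

/-- The point of the Euclidean plane with coordinates `(a, b)`. -/
def mkE2 (a b : ℝ) : E2 := WithLp.toLp 2 ![a, b]
/-- Incomplete elliptic integral of the first kind `F(x,m)`. -/
def Fell (x m : ℝ) : ℝ := ∫ θ in (0:ℝ)..x, 1 / Real.sqrt (1 - m * Real.sin θ ^ 2)

/-- Incomplete elliptic integral of the second kind `E(x,m)`. -/
def Eell (x m : ℝ) : ℝ := ∫ θ in (0:ℝ)..x, Real.sqrt (1 - m * Real.sin θ ^ 2)

/-- Complete elliptic integral of the first kind `K(m)`. -/
def Kc (m : ℝ) : ℝ := Fell (Real.pi / 2) m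

/-- Complete elliptic integral of the second kind `E(m)`. -/
def Ec (m : ℝ) : ℝ := Eell (Real.pi / 2) m

/-- `α(m) = arcsin √(1/(2m))`. -/
def alph (m : ℝ) : ℝ := Real.arcsin (Real.sqrt (1 / (2 * m)))

/-- `G(x,m) = ∫₀ˣ (1 − 2m sin²θ)(1 − m sin²θ)^{−1/2} dθ = 2E(x,m) − F(x,m)`. -/
def Gw (x m : ℝ) : ℝ :=
  ∫ θ in (0:ℝ)..x, (1 - 2 * m * Real.sin θ ^ 2) / Real.sqrt (1 - m * Real.sin θ ^ 2)

/-- `f(m) = ∫₀^{π−α(m)} (1 − 2m sin²θ)(1 − m sin²θ)^{−1/2} dθ`; its unique zero is `m_T`. -/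
def fT (m : ℝ) : ℝ := Gw (Real.pi - alph m) m
/-- `g(m) = ∫_{−π/4}^{5π/4} (1 − 2 sin²θ)(1 − m sin²θ)^{−1/2} dθ`; its unique zero is `m_H`. -/
def gH (m : ℝ) : ℝ :=
  ∫ θ in (-(Real.pi / 4))..(5 * Real.pi / 4),
    (1 - 2 * Real.sin θ ^ 2) / Real.sqrt (1 - m * Real.sin θ ^ 2)
/-- First component of the orbitlike parametrization. -/
def gammaO1 (m : ℝ) : ℝ → ℝ := fun x => (2 * Eell x m + (m - 2) * Fell x m) / m

/-- Second component of the orbitlike parametrization. -/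
def gammaO2 (m : ℝ) : ℝ → ℝ := fun x => -2 * Real.sqrt (1 - m * Real.sin x ^ 2) / m

/-- The orbitlike parametrization `γ_o(x|m) = (1/m)(2E(x,m) + (m−2)F(x,m), −2√(1 − m sin²x))`. -/
def gammaO (m : ℝ) : ℝ → E2 := fun x => mkE2 (gammaO1 m x) (gammaO2 m x)

namespace S15

def sq (m θ : ℝ) : ℝ := Real.sqrt (1 - m * Real.sin θ ^ 2)
def Df (m θ : ℝ) : ℝ := (1 - 2 * Real.sin θ ^ 2) / sq m θ
def If (m x : ℝ) : ℝ := ∫ θ in (0:ℝ)..x, Df m θ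

variable {m : ℝ} (hm : m ∈ Set.Ioo (0:ℝ) 1)
include hm

lemma base_pos (θ : ℝ) : 0 < 1 - m * Real.sin θ ^ 2 := by
  nlinarith [Real.sin_sq_le_one θ, hm.1, hm.2, sq_nonneg (Real.sin θ)]

lemma sq_pos (θ : ℝ) : 0 < sq m θ := Real.sqrt_pos.2 (base_pos hm θ)

lemma sq_sq (θ : ℝ) : sq m θ ^ 2 = 1 - m * Real.sin θ ^ 2 :=
  Real.sq_sqrt (base_pos hm θ).le

lemma cont_sq : Continuous (sq m) :=
  Real.continuous_sqrt.comp (by continuity)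

lemma cont_Df : Continuous (Df m) := by
  refine Continuous.div (by continuity) (cont_sq hm) fun θ => (sq_pos hm θ).ne'

lemma intg_Df (a b : ℝ) : IntervalIntegrable (Df m) volume a b :=
  (cont_Df hm).intervalIntegrable a b

omit hm in
lemma Df_cos (θ : ℝ) : Df m θ = Real.cos (2 * θ) / sq m θ := by
  unfold Df; rw [Real.cos_two_mul]
  have := Real.sin_sq_add_cos_sq θ
  congr 1; nlinarith


lemma cont_inv_sq : Continuous (fun θ => 1 / sq m θ) :=
  continuous_const.div (cont_sq hm) fun θ => (sq_pos hm θ).ne'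

/-- gammaO1 equals the integral of Df. -/
lemma repr1 (x : ℝ) : gammaO1 m x = If m x := by
  have hDf : ∀ θ : ℝ, Df m θ = m⁻¹ * (2 * sq m θ + (m - 2) * (1 / sq m θ)) := by
    intro θ
    have hs := sq_pos hm θ
    have hs2 := sq_sq hm θ
    have hm0 := hm.1.ne'
    field_simp [Df]
    rw [Df, hs2, div_mul_eq_mul_div, div_mul_cancel₀ _ hs.ne']; ring
  unfold If
  rw [intervalIntegral.integral_congr (g := fun θ => m⁻¹ * (2 * sq m θ + (m - 2) * (1 / sq m θ)))
    (fun θ _ => hDf θ)]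
  rw [intervalIntegral.integral_const_mul, intervalIntegral.integral_add
      (((cont_sq hm).intervalIntegrable 0 x).const_mul 2)
      (((cont_inv_sq hm).intervalIntegrable 0 x).const_mul _),
    intervalIntegral.integral_const_mul, intervalIntegral.integral_const_mul]
  unfold gammaO1 Eell Fell sq
  field_simp

lemma hasDeriv1 (x : ℝ) : HasDerivAt (gammaO1 m) (Df m x) x := by
  have : HasDerivAt (fun u => If m u) (Df m x) x := by
    unfold If
    exact intervalIntegral.integral_hasDerivAt_right (intg_Df hm 0 x)
      ((cont_Df hm).aestronglyMeasurable.stronglyMeasurableAtFilter)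
      (cont_Df hm).continuousAt
  exact this.congr_of_eventuallyEq (Filter.Eventually.of_forall fun u => (repr1 hm u))

omit hm in
lemma Df_even (θ : ℝ) : Df m (-θ) = Df m θ := by
  unfold Df sq; rw [Real.sin_neg]; ring_nf

omit hm in
lemma Df_periodic : Function.Periodic (Df m) Real.pi := by
  intro θ; unfold Df sq; rw [Real.sin_add_pi]; ring_nf

omit hm in
lemma Df_refl (θ : ℝ) : Df m (Real.pi - θ) = Df m θ := by
  unfold Df sq; rw [Real.sin_pi_sub]

omit hm in
lemma If_neg (x : ℝ) : If m (-x) = -(If m x) := by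
  have h1 : (∫ θ in (0:ℝ)..x, Df m (-θ)) = ∫ θ in (-x)..(0:ℝ), Df m θ := by
    simpa using intervalIntegral.integral_comp_neg (a := (0:ℝ)) (b := x) (Df m)
  have h2 : (∫ θ in (0:ℝ)..x, Df m (-θ)) = If m x :=
    intervalIntegral.integral_congr fun θ _ => Df_even θ
  unfold If
  rw [intervalIntegral.integral_symm, ← h1, h2]; rfl

lemma If_add_pi (x : ℝ) : If m (x + Real.pi) = If m x + If m Real.pi := by
  have hadd : If m x + (∫ θ in x..(x + Real.pi), Df m θ) = If m (x + Real.pi) :=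
    intervalIntegral.integral_add_adjacent_intervals (intg_Df hm 0 x) (intg_Df hm x _)
  have hper : (∫ θ in x..(x + Real.pi), Df m θ) = ∫ θ in (0:ℝ)..(0 + Real.pi), Df m θ :=
    (Df_periodic (m := m)).intervalIntegral_add_eq x 0
  rw [← hadd, hper, zero_add]; rfl

lemma If_pi_sub (x : ℝ) : If m (Real.pi - x) = If m Real.pi - If m x := by
  have h1 : (∫ θ in (0:ℝ)..x, Df m (Real.pi - θ)) = ∫ θ in (Real.pi - x)..(Real.pi - 0), Df m θ :=
    intervalIntegral.integral_comp_sub_left (Df m) Real.pi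
  have h2 : (∫ θ in (0:ℝ)..x, Df m (Real.pi - θ)) = If m x :=
    intervalIntegral.integral_congr fun θ _ => Df_refl θ
  have hadd : If m (Real.pi - x) + (∫ θ in (Real.pi - x)..Real.pi, Df m θ) = If m Real.pi :=
    intervalIntegral.integral_add_adjacent_intervals (intg_Df hm 0 _) (intg_Df hm _ _)
  have h3 : (∫ θ in (Real.pi - x)..Real.pi, Df m θ) = If m x := by
    rw [← h2, h1, sub_zero]
  linarith [hadd, h3]

lemma Df_pos_of (θ : ℝ) (h1 : -(Real.pi/2) < 2*θ) (h2 : 2*θ < Real.pi/2) : 0 < Df m θ := by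
  rw [Df_cos]
  exact div_pos (Real.cos_pos_of_mem_Ioo ⟨h1, h2⟩) (sq_pos hm θ)

lemma diffble1 : Differentiable ℝ (gammaO1 m) := fun x => (hasDeriv1 hm x).differentiableAt

lemma deriv1_eq (x : ℝ) : deriv (gammaO1 m) x = Df m x := (hasDeriv1 hm x).deriv

lemma mono1 : StrictMonoOn (gammaO1 m) (Icc (-(Real.pi/4)) (Real.pi/4)) := by
  apply strictMonoOn_of_deriv_pos (convex_Icc _ _) (diffble1 hm).continuous.continuousOn
  intro x hx
  rw [interior_Icc] at hx
  rw [deriv1_eq hm]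
  exact Df_pos_of hm x (by linarith [hx.1]) (by linarith [hx.2])

lemma anti2 : StrictAntiOn (gammaO1 m) (Icc (Real.pi/4) (3*Real.pi/4)) := by
  apply strictAntiOn_of_deriv_neg (convex_Icc _ _) (diffble1 hm).continuous.continuousOn
  intro x hx
  rw [interior_Icc] at hx
  rw [deriv1_eq hm, Df_cos]
  apply div_neg_of_neg_of_pos _ (sq_pos hm x)
  apply Real.cos_neg_of_pi_div_two_lt_of_lt (by linarith [hx.1]) (by linarith [hx.2])

lemma mono3 : StrictMonoOn (gammaO1 m) (Icc (3*Real.pi/4) (5*Real.pi/4)) := by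
  apply strictMonoOn_of_deriv_pos (convex_Icc _ _) (diffble1 hm).continuous.continuousOn
  intro x hx
  rw [interior_Icc] at hx
  rw [deriv1_eq hm, Df_cos]
  have : Real.cos (2*x) = Real.cos (2*x - 2*Real.pi) := (Real.cos_sub_two_pi _).symm
  rw [this]
  refine div_pos (Real.cos_pos_of_mem_Ioo ⟨by linarith [hx.1], by linarith [hx.2]⟩) (sq_pos hm x)

lemma quarter_pos : 0 < gammaO1 m (Real.pi/4) := by
  rw [repr1 hm]
  apply intervalIntegral.intervalIntegral_pos_of_pos_on (intg_Df hm 0 _)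
  · intro x hx
    exact Df_pos_of hm x (by linarith [hx.1, Real.pi_pos]) (by linarith [hx.2])
  · linarith [Real.pi_pos]

omit hm in
lemma cos2_eq (θ : ℝ) : Real.cos (2*θ) = 1 - 2*Real.sin θ^2 := by
  rw [Real.cos_two_mul]; nlinarith [Real.sin_sq_add_cos_sq θ]

lemma hasDeriv2 (x : ℝ) :
    HasDerivAt (gammaO2 m) (2 * Real.sin x * Real.cos x / sq m x) x := by
  have h1 : HasDerivAt (fun x => Real.sin x ^ 2) (2 * Real.sin x * Real.cos x) x := by
    simpa [mul_comm] using (Real.hasDerivAt_sin x).fun_pow 2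
  have h2 : HasDerivAt (fun x => 1 - m * Real.sin x ^ 2)
      (-(m * (2 * Real.sin x * Real.cos x))) x := by
    simpa using ((h1.const_mul m).const_sub 1)
  have h3 := (h2.sqrt (base_pos hm x).ne')
  have h4 := (h3.const_mul (-2)).div_const m
  refine h4.congr_deriv ?_
  have hs : Real.sqrt (1 - m * Real.sin x ^ 2) ≠ 0 := (sq_pos hm x).ne'
  have hm0 : m ≠ 0 := hm.1.ne'
  unfold sq
  field_simp

lemma hasDerivO (x : ℝ) :
    HasDerivAt (gammaO m) (mkE2 (Df m x) (2 * Real.sin x * Real.cos x / sq m x)) x := by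
  have hf : HasDerivAt (fun x => (![gammaO1 m x, gammaO2 m x] : Fin 2 → ℝ))
      (![Df m x, 2 * Real.sin x * Real.cos x / sq m x]) x := by
    rw [hasDerivAt_pi]
    intro i
    fin_cases i
    · simpa using hasDeriv1 hm x
    · simpa using hasDeriv2 hm x
  have h2 := ((PiLp.continuousLinearEquiv 2 ℝ (fun _ : Fin 2 => ℝ)).symm.toContinuousLinearMap.hasFDerivAt.comp_hasDerivAt x hf)
  exact h2

omit hm in
lemma five_q : (5*Real.pi/4 : ℝ) = Real.pi/4 + Real.pi := by ring

omit hm in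
lemma sin_sq_q : Real.sin (-(Real.pi/4)) ^ 2 = 1/2 ∧ Real.sin (5*Real.pi/4) ^ 2 = 1/2 := by
  have h2 : Real.sqrt 2 ^ 2 = 2 := Real.sq_sqrt (by norm_num)
  constructor
  · rw [Real.sin_neg, Real.sin_pi_div_four]; nlinarith
  · rw [five_q, Real.sin_add_pi, Real.sin_pi_div_four]; nlinarith

omit hm in
lemma Df_end1 : Df m (-(Real.pi/4)) = 0 := by
  unfold Df; rw [sin_sq_q.1]; norm_num

omit hm in
lemma Df_end2 : Df m (5*Real.pi/4) = 0 := by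
  unfold Df; rw [sin_sq_q.2]; norm_num

omit hm in
lemma sq_end : sq m (-(Real.pi/4)) = sq m (5*Real.pi/4) := by
  unfold sq; rw [sin_sq_q.1, sin_sq_q.2]

omit hm in
lemma d2_end : 2 * Real.sin (-(Real.pi/4)) * Real.cos (-(Real.pi/4)) / sq m (-(Real.pi/4))
    = -(2 * Real.sin (5*Real.pi/4) * Real.cos (5*Real.pi/4) / sq m (5*Real.pi/4)) := by
  rw [sq_end, Real.sin_neg, Real.cos_neg, Real.sin_pi_div_four, Real.cos_pi_div_four,
    five_q, Real.sin_add_pi, Real.cos_add_pi, Real.sin_pi_div_four, Real.cos_pi_div_four]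
  ring

lemma gH_eq : gH m = If m (5*Real.pi/4) - If m (-(Real.pi/4)) := by
  have hadd : If m (-(Real.pi/4)) + (∫ θ in (-(Real.pi/4))..(5*Real.pi/4), Df m θ)
      = If m (5*Real.pi/4) :=
    intervalIntegral.integral_add_adjacent_intervals (intg_Df hm 0 _) (intg_Df hm _ _)
  have : gH m = ∫ θ in (-(Real.pi/4))..(5*Real.pi/4), Df m θ := rfl
  linarith

set_option maxHeartbeats 1000000 in
lemma injOn (hz : gH m = 0) :
    Set.InjOn (gammaO m) (Set.Ico (-(Real.pi/4)) (5*Real.pi/4)) := by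
  have pi_pos := Real.pi_pos
  set A := If m (Real.pi/4) with hA
  have hApos : 0 < A := by
    have := quarter_pos hm; rwa [repr1 hm] at this
  have hneg : If m (-(Real.pi/4)) = -A := If_neg _
  have h5 : If m (5*Real.pi/4) = A + If m Real.pi := by
    rw [five_q, If_add_pi hm]
  have hpi : If m Real.pi = -2*A := by
    have hg := gH_eq hm
    rw [hz] at hg; linarith
  have hhalf : If m (Real.pi/2) = -A := by
    have h := If_pi_sub hm (Real.pi/2)
    rw [show Real.pi - Real.pi/2 = Real.pi/2 by ring] at h; linarith
  have key : ∀ x ∈ Set.Ico (-(Real.pi/4)) (5*Real.pi/4),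
      ∀ y ∈ Set.Ico (-(Real.pi/4)) (5*Real.pi/4),
      gammaO m x = gammaO m y → x ≤ y → x = y := by
    intro x hx y hy hxy hle
    have e1 : gammaO1 m x = gammaO1 m y := by
      have := congrArg (fun v : E2 => v 0) hxy
      simpa [gammaO, mkE2] using this
    have e2 : gammaO2 m x = gammaO2 m y := by
      have := congrArg (fun v : E2 => v 1) hxy
      simpa [gammaO, mkE2] using this
    have F1 : If m x = If m y := by
      rw [← repr1 hm, ← repr1 hm]; exact e1
    have hm0 : m ≠ 0 := hm.1.ne'
    have hs : Real.sin x ^ 2 = Real.sin y ^ 2 := by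
      have hbx := (base_pos hm x)
      have hby := (base_pos hm y)
      unfold gammaO2 at e2
      field_simp at e2
      have h := (Real.sqrt_inj hbx.le hby.le).mp (neg_inj.mp e2)
      exact mul_left_cancel₀ hm0 (by linarith)
    have hc : Real.cos (2*x) = Real.cos (2*y) := by
      rw [cos2_eq, cos2_eq, hs]
    obtain ⟨k, hk | hk⟩ := Real.cos_eq_cos_iff.mp hc
    · -- 2y = 2kπ + 2x, i.e. y = kπ + x
      have hkr : (k:ℝ) * Real.pi = y - x := by push_cast at hk; linarith
      have hk0 : (0:ℝ) ≤ (k:ℝ) := by nlinarith [hx.1, hy.2]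
      have hk2 : (k:ℝ) < 2 := by nlinarith [hx.1, hy.2]
      have hk0' : (0:ℤ) ≤ k := by exact_mod_cast hk0
      have hk2' : k < 2 := by exact_mod_cast hk2
      interval_cases k
      · push_cast at hkr; linarith
      · exfalso
        have hyx : y = x + Real.pi := by push_cast at hkr; linarith
        have h2 : If m y = If m x + If m Real.pi := by rw [hyx]; exact If_add_pi hm x
        linarith
    · -- 2y = 2kπ − 2x, i.e. y = kπ − x
      have hkr : (k:ℝ) * Real.pi = x + y := by push_cast at hk; linarith
      have hk0 : (-1:ℝ) < (k:ℝ) := by nlinarith [hx.1, hy.1]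
      have hk3 : (k:ℝ) < 3 := by nlinarith [hx.2, hy.2]
      have hk0' : (-1:ℤ) < k := by exact_mod_cast hk0
      have hk3' : k < 3 := by exact_mod_cast hk3
      interval_cases k
      · -- y = -x
        rcases eq_or_lt_of_le hle with heq | hlt
        · exact heq
        exfalso
        push_cast at hkr
        have hx0 : x < 0 := by linarith
        have hmx : x ∈ Set.Icc (-(Real.pi/4)) (Real.pi/4) := ⟨hx.1, by linarith⟩
        have hmy : y ∈ Set.Icc (-(Real.pi/4)) (Real.pi/4) := ⟨by linarith [hx.1], by linarith [hx.1]⟩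
        have := mono1 hm hmx hmy hlt
        linarith [this, e1.ge]
      · -- y = π − x
        rcases eq_or_lt_of_le hle with heq | hlt
        · exact heq
        exfalso
        push_cast at hkr
        have hyx : y = Real.pi - x := by linarith
        have hxlt : x < Real.pi/2 := by linarith
        have hxgt : -(Real.pi/4) < x := by linarith [hy.2]
        have h2 : If m y = If m Real.pi - If m x := by rw [hyx]; exact If_pi_sub hm x
        have hFx : If m x = -A := by linarith
        by_cases hx4 : x ≤ Real.pi/4
        · have hmem1 : -(Real.pi/4) ∈ Set.Icc (-(Real.pi/4)) (Real.pi/4) :=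
            ⟨le_refl _, by linarith⟩
          have hmem2 : x ∈ Set.Icc (-(Real.pi/4)) (Real.pi/4) := ⟨hx.1, hx4⟩
          have := mono1 hm hmem1 hmem2 hxgt
          rw [repr1 hm, repr1 hm] at this
          linarith
        · push_neg at hx4
          have hmem1 : x ∈ Set.Icc (Real.pi/4) (3*Real.pi/4) := ⟨hx4.le, by linarith⟩
          have hmem2 : Real.pi/2 ∈ Set.Icc (Real.pi/4) (3*Real.pi/4) :=
            ⟨by linarith, by linarith⟩
          have := anti2 hm hmem1 hmem2 hxlt
          rw [repr1 hm, repr1 hm] at this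
          linarith
      · -- y = 2π − x
        push_cast at hkr
        have hxgt : 3*Real.pi/4 < x := by linarith [hy.2]
        have hxle : x ≤ Real.pi := by linarith
        have hyx : y = (Real.pi - x) + Real.pi := by linarith
        have h2 : If m y = If m (Real.pi - x) + If m Real.pi := by
          rw [hyx]; exact If_add_pi hm _
        have h3 : If m (Real.pi - x) = If m Real.pi - If m x := If_pi_sub hm x
        have hFx : If m x = If m Real.pi := by linarith
        have hmem1 : x ∈ Set.Icc (3*Real.pi/4) (5*Real.pi/4) := ⟨hxgt.le, by linarith⟩
        have hmem2 : Real.pi ∈ Set.Icc (3*Real.pi/4) (5*Real.pi/4) := ⟨by linarith, by linarith⟩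
        have hxpi : x = Real.pi := by
          refine (mono3 hm).injOn hmem1 hmem2 ?_
          rw [repr1 hm, repr1 hm]; exact hFx
        rw [hxpi] at hkr ⊢
        linarith
  intro x hx y hy hxy
  rcases le_total x y with h | h
  · exact key x hx y hy hxy h
  · exact (key y hy x hx hxy.symm h).symm

end S15

/-- Proposition 2.24: the heart-shaped elastica is an embedded cuspidal
elastica: `γ_o(−π/4|m_H) = γ_o(5π/4|m_H)`, the first component has vanishing derivative at
both endpoints while the derivatives of the second component are opposite there (so the unit
tangents at the endpoints are opposite), and `γ_o(·|m_H)` is injective on `[−π/4, 5π/4)`. -/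
theorem stmt15 (mH : ℝ) (hmH : mH ∈ Set.Ioo (0:ℝ) 1) (hmHzero : gH mH = 0) :
    gammaO mH (-(Real.pi / 4)) = gammaO mH (5 * Real.pi / 4) ∧
    deriv (gammaO1 mH) (-(Real.pi / 4)) = 0 ∧
    deriv (gammaO1 mH) (5 * Real.pi / 4) = 0 ∧
    deriv (gammaO2 mH) (-(Real.pi / 4)) = -deriv (gammaO2 mH) (5 * Real.pi / 4) ∧
    (‖deriv (gammaO mH) (-(Real.pi / 4))‖)⁻¹ • deriv (gammaO mH) (-(Real.pi / 4)) =
      -((‖deriv (gammaO mH) (5 * Real.pi / 4)‖)⁻¹ • deriv (gammaO mH) (5 * Real.pi / 4)) ∧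
    Set.InjOn (gammaO mH) (Set.Ico (-(Real.pi / 4)) (5 * Real.pi / 4)) := by
  have hq : (-(Real.pi/4) : ℝ) = -(Real.pi/4) := rfl
  have h14 : (5 * Real.pi / 4 : ℝ) = 5 * Real.pi/4 := by ring
  refine ⟨?_, ?_, ?_, ?_, ?_, ?_⟩
  · -- closure
    have h1 : gammaO1 mH (-(Real.pi/4)) = gammaO1 mH (5*Real.pi/4) := by
      rw [S15.repr1 hmH, S15.repr1 hmH]
      have := S15.gH_eq hmH
      rw [hmHzero] at this; linarith
    have h2 : gammaO2 mH (-(Real.pi/4)) = gammaO2 mH (5*Real.pi/4) := by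
      unfold gammaO2
      rw [S15.sin_sq_q.1, S15.sin_sq_q.2]
    unfold gammaO
    rw [h14, h1, h2]
  · rw [(S15.hasDeriv1 hmH _).deriv]; exact S15.Df_end1
  · rw [(S15.hasDeriv1 hmH _).deriv, h14]; exact S15.Df_end2
  · rw [(S15.hasDeriv2 hmH _).deriv, (S15.hasDeriv2 hmH _).deriv, h14]
    exact S15.d2_end
  · have hda := (S15.hasDerivO hmH (-(Real.pi/4))).deriv
    have hdb := (S15.hasDerivO hmH (5*Real.pi/4)).deriv
    rw [h14, hda, hdb]
    have hvv : mkE2 (S15.Df mH (-(Real.pi/4)))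
        (2 * Real.sin (-(Real.pi/4)) * Real.cos (-(Real.pi/4)) / S15.sq mH (-(Real.pi/4)))
        = -(mkE2 (S15.Df mH (5*Real.pi/4))
        (2 * Real.sin (5*Real.pi/4) * Real.cos (5*Real.pi/4) / S15.sq mH (5*Real.pi/4))) := by
      rw [S15.Df_end1, S15.Df_end2, S15.d2_end]
      ext i
      fin_cases i <;> simp [mkE2]
    rw [hvv, norm_neg, smul_neg]
  · rw [h14]
    exact S15.injOn hmH hmHzero
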